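/- Let N ≥ 1, let λ ∈ ℝ^N have all entries in [0,1], let η ∈ [0,1], and let m > 0. Then for every v ∈ ℝ^N and every t ∈ ℕ, λᵀ A(λ,η,m)^t v² ≥ ((1 − η)² + (η²/m) ‖λ‖²)^t · (λᵀ v²), where ‖λ‖² = Σ_k λ_k². -/
import Mathlib


open Matrix

/-- The matrix `A(λ,η,m) = (I − η diag(λ))² + (η²/m) diag(λ²) + (η²/m) λλᵀ`. -/
noncomputable def Amat (N : ℕ) (lam : Fin N → ℝ) (η m : ℝ) : Matrix (Fin N) (Fin N) ℝ :=
  (1 - η • Matrix.diagonal lam) ^ 2 + (η ^ 2 / m) • Matrix.diagonal (fun k => (lam k) ^ 2)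
    + (η ^ 2 / m) • vecMulVec lam lam

lemma Amat_mulVec (N : ℕ) (lam : Fin N → ℝ) (η m : ℝ) (w : Fin N → ℝ) (i : Fin N) :
    (Amat N lam η m).mulVec w i
      = (1 - η * lam i) ^ 2 * w i + (η ^ 2 / m) * ((lam i) ^ 2 * w i)
        + (η ^ 2 / m) * (lam i * (lam ⬝ᵥ w)) := by
  have hD : ((1 : Matrix (Fin N) (Fin N) ℝ) - η • Matrix.diagonal lam) ^ 2
      = Matrix.diagonal (fun k => (1 - η * lam k) ^ 2) := by
    have h1 : (1 : Matrix (Fin N) (Fin N) ℝ) - η • Matrix.diagonal lam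
        = Matrix.diagonal (fun k => 1 - η * lam k) := by
      ext i j
      by_cases h : i = j <;>
        simp [Matrix.diagonal, Matrix.one_apply, h]
    rw [h1, sq]
    simp [Matrix.diagonal_mul_diagonal, sq]
  have hV : (vecMulVec lam lam).mulVec w i = lam i * (lam ⬝ᵥ w) := by
    simp [Matrix.mulVec, dotProduct, vecMulVec_apply, Finset.mul_sum, mul_assoc]
  simp [Amat, hD, Matrix.add_mulVec, Matrix.smul_mulVec, Matrix.mulVec_diagonal, hV]

lemma Amat_mulVec_nonneg (N : ℕ) (lam : Fin N → ℝ) (hlam : ∀ k, 0 ≤ lam k)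
    (η m : ℝ) (hm : 0 < m) (w : Fin N → ℝ) (hw : ∀ k, 0 ≤ w k) (i : Fin N) :
    0 ≤ (Amat N lam η m).mulVec w i := by
  rw [Amat_mulVec]
  have hc : 0 ≤ η ^ 2 / m := div_nonneg (sq_nonneg _) hm.le
  have hS : 0 ≤ lam ⬝ᵥ w :=
    Finset.sum_nonneg fun k _ => mul_nonneg (hlam k) (hw k)
  have h1 : 0 ≤ (1 - η * lam i) ^ 2 * w i := mul_nonneg (sq_nonneg _) (hw i)
  have h2 : 0 ≤ (η ^ 2 / m) * ((lam i) ^ 2 * w i) :=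
    mul_nonneg hc (mul_nonneg (sq_nonneg _) (hw i))
  have h3 : 0 ≤ (η ^ 2 / m) * (lam i * (lam ⬝ᵥ w)) :=
    mul_nonneg hc (mul_nonneg (hlam i) hS)
  linarith

lemma Amat_pow_mulVec_nonneg (N : ℕ) (lam : Fin N → ℝ) (hlam : ∀ k, 0 ≤ lam k)
    (η m : ℝ) (hm : 0 < m) (w : Fin N → ℝ) (hw : ∀ k, 0 ≤ w k) (t : ℕ) (i : Fin N) :
    0 ≤ ((Amat N lam η m) ^ t).mulVec w i := by
  induction t generalizing i with
  | zero => simpa using hw i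
  | succ n ih =>
    rw [show (Amat N lam η m) ^ (n + 1) = Amat N lam η m * (Amat N lam η m) ^ n from
      pow_succ' _ _, ← Matrix.mulVec_mulVec]
    exact Amat_mulVec_nonneg N lam hlam η m hm _ ih i

/-- If all entries of `λ` lie in `[0,1]`, `η ∈ [0,1]` and `m > 0`, then for
every `v` and every `t`,
`λᵀ A(λ,η,m)^t v² ≥ ((1 − η)² + (η²/m) ‖λ‖²)^t · (λᵀ v²)`, where `‖λ‖² = ∑ₖ λₖ²`. -/
theorem sgd_loss_lower_bound
    (N : ℕ) (hN : 1 ≤ N) (lam : Fin N → ℝ) (hlam : ∀ k, lam k ∈ Set.Icc (0 : ℝ) 1)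
    (η : ℝ) (hη : η ∈ Set.Icc (0 : ℝ) 1) (m : ℝ) (hm : 0 < m)
    (v : Fin N → ℝ) (t : ℕ) :
    ((1 - η) ^ 2 + (η ^ 2 / m) * ∑ k, (lam k) ^ 2) ^ t * (lam ⬝ᵥ fun k => (v k) ^ 2)
      ≤ lam ⬝ᵥ ((Amat N lam η m) ^ t).mulVec (fun k => (v k) ^ 2) := by
  set c : ℝ := (1 - η) ^ 2 + (η ^ 2 / m) * ∑ k, (lam k) ^ 2 with hc
  have hcm : 0 ≤ η ^ 2 / m := div_nonneg (sq_nonneg _) hm.le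
  have hc0 : 0 ≤ c := by
    rw [hc]
    have h1 : 0 ≤ (η ^ 2 / m) * ∑ k, (lam k) ^ 2 :=
      mul_nonneg hcm (Finset.sum_nonneg fun k _ => sq_nonneg _)
    nlinarith [sq_nonneg (1 - η)]
  have key : ∀ w : Fin N → ℝ, (∀ k, 0 ≤ w k) →
      c * (lam ⬝ᵥ w) ≤ lam ⬝ᵥ (Amat N lam η m).mulVec w := by
    intro w hw
    have hS : 0 ≤ lam ⬝ᵥ w :=
      Finset.sum_nonneg fun k _ => mul_nonneg (hlam k).1 (hw k)
    have expand : lam ⬝ᵥ (Amat N lam η m).mulVec w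
        = ∑ i, lam i * ((1 - η * lam i) ^ 2 * w i + (η ^ 2 / m) * ((lam i) ^ 2 * w i)
            + (η ^ 2 / m) * (lam i * (lam ⬝ᵥ w))) := by
      simp [dotProduct, Amat_mulVec]
    have hle : ∀ i ∈ Finset.univ, lam i * ((1 - η) ^ 2 * w i)
          + (η ^ 2 / m) * (lam i ^ 2 * (lam ⬝ᵥ w))
        ≤ lam i * ((1 - η * lam i) ^ 2 * w i + (η ^ 2 / m) * ((lam i) ^ 2 * w i)
            + (η ^ 2 / m) * (lam i * (lam ⬝ᵥ w))) := by
      intro i _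
      have h1 : (1 - η) ^ 2 ≤ (1 - η * lam i) ^ 2 := by
        have ha : 0 ≤ 1 - η := by linarith [hη.2]
        have hb : 1 - η ≤ 1 - η * lam i := by nlinarith [hη.1, (hlam i).2]
        exact pow_le_pow_left₀ ha hb 2
      have h2 : lam i * ((1 - η) ^ 2 * w i) ≤ lam i * ((1 - η * lam i) ^ 2 * w i) :=
        mul_le_mul_of_nonneg_left (mul_le_mul_of_nonneg_right h1 (hw i)) (hlam i).1
      have h3 : 0 ≤ lam i * ((η ^ 2 / m) * ((lam i) ^ 2 * w i)) :=
        mul_nonneg (hlam i).1 (mul_nonneg hcm (mul_nonneg (sq_nonneg _) (hw i)))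
      nlinarith [h2, h3]
    have e1 : ∑ i, lam i * ((1 - η) ^ 2 * w i) = (1 - η) ^ 2 * (lam ⬝ᵥ w) := by
      simp only [dotProduct, Finset.mul_sum]
      exact Finset.sum_congr rfl fun i _ => by ring
    have e2 : ∑ i, (η ^ 2 / m) * ((lam i) ^ 2 * (lam ⬝ᵥ w))
        = (η ^ 2 / m) * (∑ k, (lam k) ^ 2) * (lam ⬝ᵥ w) := by
      rw [← Finset.mul_sum, ← Finset.sum_mul, mul_assoc]
    calc c * (lam ⬝ᵥ w)
        = (1 - η) ^ 2 * (lam ⬝ᵥ w) + (η ^ 2 / m) * (∑ k, (lam k) ^ 2) * (lam ⬝ᵥ w) := by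
          rw [hc]; ring
      _ = ∑ i, (lam i * ((1 - η) ^ 2 * w i)
            + (η ^ 2 / m) * (lam i ^ 2 * (lam ⬝ᵥ w))) := by
          rw [Finset.sum_add_distrib, e1, e2]
      _ ≤ _ := by rw [expand]; exact Finset.sum_le_sum hle
  induction t with
  | zero => simp
  | succ n ih =>
    have hAn : ∀ k, 0 ≤ ((Amat N lam η m) ^ n).mulVec (fun k => (v k) ^ 2) k :=
      Amat_pow_mulVec_nonneg N lam (fun k => (hlam k).1) η m hm _ (fun k => sq_nonneg _) n
    have step := key (((Amat N lam η m) ^ n).mulVec (fun k => (v k) ^ 2)) hAn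
    rw [show (Amat N lam η m) ^ (n + 1) = Amat N lam η m * (Amat N lam η m) ^ n from
      pow_succ' _ _, ← Matrix.mulVec_mulVec]
    calc c ^ (n + 1) * (lam ⬝ᵥ fun k => (v k) ^ 2)
        = c * (c ^ n * (lam ⬝ᵥ fun k => (v k) ^ 2)) := by ring
      _ ≤ c * (lam ⬝ᵥ ((Amat N lam η m) ^ n).mulVec (fun k => (v k) ^ 2)) :=
          mul_le_mul_of_nonneg_left ih hc0
      _ ≤ _ := step
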